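/- arXiv:1801.06824 — 2 statements merged into one kernel-verified Lean document; each statement's English description precedes it below -/
import Mathlib

section
/- For every positive integer i, let G_i be the full join of a path P on i² vertices and an independent set A on i vertices. Then every non-empty set I of vertices of G_i with fan(G_i[I]) ≤ i fails to be an i-island; consequently col_{fan,i}(G_i) ≥ i+1. -/
/-- The full join of a path on `i²` vertices and an independent set on `i` vertices. -/
def fullJoinPathIndep (i : ℕ) : SimpleGraph (Fin (i ^ 2) ⊕ Fin i) where
  Adj x y :=
    match x, y with
    | .inl a, .inl b => (a : ℕ) + 1 = b ∨ (b : ℕ) + 1 = a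
    | .inl _, .inr _ => True
    | .inr _, .inl _ => True
    | .inr _, .inr _ => False
  symm := ⟨by rintro (a | a) (b | b) h <;> simp_all <;> tauto⟩
  loopless := ⟨by rintro (a | a) h <;> simp_all⟩

/-- The `j`-th element of the `k`-th block of length `i` in `Fin (i^2)`. -/
def blk (i : ℕ) (k j : Fin i) : Fin (i ^ 2) :=
  ⟨(k : ℕ) * i + j, by
    have hk : (k : ℕ) + 1 ≤ i := k.2
    have hj : (j : ℕ) < i := j.2
    calc (k : ℕ) * i + j < ((k : ℕ) + 1) * i := by rw [add_mul, one_mul]; omega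
    _ ≤ i * i := Nat.mul_le_mul_right i hk
    _ = i ^ 2 := (sq i).symm⟩

lemma blk_inj (i : ℕ) {k k' j j' : Fin i} (h : blk i k j = blk i k' j') :
    k = k' ∧ j = j' := by
  have h' : (k : ℕ) * i + j = (k' : ℕ) * i + j' := congrArg Fin.val h
  have hk : (k : ℕ) = k' := by
    have h1 : ((j : ℕ) + (k : ℕ) * i) / i = k := by
      rw [Nat.add_mul_div_right _ _ (by omega : 0 < i), Nat.div_eq_of_lt j.2]; omega
    have h2 : ((j' : ℕ) + (k' : ℕ) * i) / i = k' := by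
      rw [Nat.add_mul_div_right _ _ (by omega : 0 < i), Nat.div_eq_of_lt j'.2]; omega
    rw [← h1, ← h2]; congr 1; omega
  refine ⟨Fin.ext hk, Fin.ext ?_⟩
  rw [hk] at h'
  omega

lemma aux_card {V : Type*} [Fintype V] {S : Set V} {i : ℕ} (f : Fin i → V)
    (hf : Function.Injective f) (h : ∀ k, f k ∈ S) : i ≤ S.ncard := by
  have hsub : Set.range f ⊆ S := Set.range_subset_iff.mpr h
  have := Set.ncard_le_ncard hsub S.toFinite
  have hr : (Set.range f).ncard = i := by
    rw [← Nat.card_coe_set_eq, Nat.card_range_of_injective hf, Nat.card_eq_fintype_card,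
      Fintype.card_fin]
  omega

/-- every non-empty vertex set `I` of `G_i` with `fan(G_i[I]) ≤ i`
(no fan on more than `i` vertices inside `I`, i.e. no fan with `m ≥ i` path vertices)
fails to be an `i`-island: some vertex of `I` has at least `i` neighbors outside `I`. -/
theorem stmt_2 (i : ℕ) (hi : 1 ≤ i)
    (I : Finset (Fin (i ^ 2) ⊕ Fin i)) (hne : I.Nonempty)
    (hfan : ∀ m : ℕ, i ≤ m →
      ¬ ∃ u ∈ I, ∃ v : Fin m → Fin (i ^ 2) ⊕ Fin i,
          (∀ j, v j ∈ I) ∧ Function.Injective v ∧ (∀ j, v j ≠ u) ∧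
          (∀ j, (fullJoinPathIndep i).Adj u (v j)) ∧
          (∀ j k : Fin m, (j : ℕ) + 1 = (k : ℕ) → (fullJoinPathIndep i).Adj (v j) (v k))) :
    ∃ v ∈ I, i ≤ {w | (fullJoinPathIndep i).Adj v w ∧ w ∉ I}.ncard := by
  by_cases hA : ∃ a : Fin i, Sum.inr a ∈ I
  · obtain ⟨a, ha⟩ := hA
    refine ⟨Sum.inr a, ha, ?_⟩
    by_cases hblk : ∃ k : Fin i, ∀ j : Fin i, Sum.inl (blk i k j) ∈ I
    · -- build a fan, contradiction
      obtain ⟨k, hk⟩ := hblk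
      exact absurd
        ⟨Sum.inr a, ha, fun j => Sum.inl (blk i k j), fun j => hk j,
          fun j j' hjj => by
            have := (blk_inj i (Sum.inl.inj hjj)).2
            exact this,
          fun j => by simp,
          fun j => by trivial,
          fun j j' hjj => by
            left
            show ((blk i k j : Fin (i ^ 2)) : ℕ) + 1 = (blk i k j' : Fin (i ^ 2))
            show ((k : ℕ) * i + j) + 1 = (k : ℕ) * i + j'
            omega⟩
        (hfan i le_rfl)
    · push_neg at hblk
      choose c hc using hblk
      apply aux_card (fun k => Sum.inl (blk i k (c k)))
      · intro k k' h
        exact (blk_inj i (Sum.inl.inj h)).1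
      · intro k
        exact ⟨trivial, hc k⟩
  · push_neg at hA
    obtain ⟨u, hu⟩ := hne
    refine ⟨u, hu, ?_⟩
    apply aux_card (fun b : Fin i => Sum.inr b)
    · intro b b' h; exact Sum.inr.inj h
    · intro b
      refine ⟨?_, hA b⟩
      match u, hu with
      | Sum.inl x, _ => trivial
      | Sum.inr x, hu => exact absurd hu (by simpa using hA x)
end

section
/- Let t, n, p′ be positive integers with n ≥ p′(t+1) + t + 1, and let P_n^t be the t-th power of the path on n vertices. Then every non-empty vertex set I of P_n^t of size at most p′ contains a vertex with at least t neighbors outside I; consequently P_n^t has no t-island of size at most p′ and col_{⋆,p′}(P_n^t) ≥ t+1. -/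
/-- The `t`-th power `P_n^t` of the path on `n` vertices: `i ~ j` iff `1 ≤ |i - j| ≤ t`. -/
def pathPower (t n : ℕ) : SimpleGraph (Fin n) where
  Adj i j := i ≠ j ∧ (i : ℕ) - (j : ℕ) ≤ t ∧ (j : ℕ) - (i : ℕ) ≤ t
  symm := by constructor; intro i j h; exact ⟨h.1.symm, h.2.2, h.2.1⟩
  loopless := by constructor; intro i h; exact h.1 rfl

lemma key_lemma (t n : ℕ) (I : Finset (Fin n)) (v : Fin n)
    (f : Fin t → Fin n) (hinj : Function.Injective f)
    (hf : ∀ i, (pathPower t n).Adj v (f i) ∧ f i ∉ I) :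
    t ≤ {w | (pathPower t n).Adj v w ∧ w ∉ I}.ncard := by
  have hsub : Set.range f ⊆ {w | (pathPower t n).Adj v w ∧ w ∉ I} := by
    rintro w ⟨i, rfl⟩; exact hf i
  have h1 : (Set.range f).ncard = t := by
    have : Set.range f = ↑(Finset.univ.image f) := by
      ext w; simp
    rw [this, Set.ncard_coe_finset, Finset.card_image_of_injective _ hinj,
      Finset.card_univ, Fintype.card_fin]
  calc t = (Set.range f).ncard := h1.symm
    _ ≤ _ := Set.ncard_le_ncard hsub (Set.toFinite _)

/-- if `n ≥ p'(t+1) + t + 1`, then every nonempty vertex set `I` of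
`P_n^t` of size at most `p'` contains a vertex with at least `t` neighbors outside `I`;
hence `P_n^t` has no `t`-island of size at most `p'`. -/
theorem stmt_14 (t n p' : ℕ) (ht : 1 ≤ t) (hp' : 1 ≤ p')
    (hn : p' * (t + 1) + t + 1 ≤ n)
    (I : Finset (Fin n)) (hne : I.Nonempty) (hcard : I.card ≤ p') :
    ∃ v ∈ I, t ≤ {w | (pathPower t n).Adj v w ∧ w ∉ I}.ncard := by
  -- find an empty block
  obtain ⟨j, hj, hjI⟩ : ∃ j < p' + 1, ∀ a ∈ I, (a : ℕ) / (t + 1) ≠ j := by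
    by_contra h
    push_neg at h
    have hs : Finset.range (p' + 1) ⊆ I.image (fun a : Fin n => (a : ℕ) / (t + 1)) := by
      intro j hj
      simp only [Finset.mem_range] at hj
      obtain ⟨a, ha, he⟩ := h j hj
      exact Finset.mem_image.mpr ⟨a, ha, he⟩
    have h1 := Finset.card_le_card hs
    have h2 := Finset.card_image_le (s := I) (f := fun a : Fin n => (a : ℕ) / (t + 1))
    rw [Finset.card_range] at h1
    omega
  set b := j * (t + 1) with hb
  have hbn : b + t + 1 ≤ n := by
    have : j * (t + 1) ≤ p' * (t + 1) := by
      apply Nat.mul_le_mul_right; omega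
    omega
  have hgap : ∀ a ∈ I, (a : ℕ) < b ∨ b + t + 1 ≤ (a : ℕ) := by
    intro a ha
    by_contra hc
    push_neg at hc
    have he : (j + 1) * (t + 1) = b + t + 1 := by rw [hb]; ring
    exact hjI a ha (Nat.div_eq_of_lt_le hc.1 (by omega))
  by_cases hlow : ∃ a ∈ I, (a : ℕ) < b
  · -- take the max element below b
    set J := I.filter (fun a : Fin n => (a : ℕ) < b) with hJ
    have hJne : J.Nonempty := by
      obtain ⟨a, ha, hab⟩ := hlow
      exact ⟨a, Finset.mem_filter.mpr ⟨ha, hab⟩⟩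
    set v := J.max' hJne with hv
    have hvJ : v ∈ J := J.max'_mem hJne
    have hvI : v ∈ I := (Finset.mem_filter.mp hvJ).1
    have hvb : (v : ℕ) < b := (Finset.mem_filter.mp hvJ).2
    refine ⟨v, hvI, ?_⟩
    have hwn : ∀ i : Fin t, (v : ℕ) + (i : ℕ) + 1 < n := fun i => by
      have := i.isLt; omega
    refine key_lemma t n I v (fun i => ⟨(v : ℕ) + (i : ℕ) + 1, hwn i⟩) ?_ ?_
    · intro i i' h
      have : (v : ℕ) + (i : ℕ) + 1 = (v : ℕ) + (i' : ℕ) + 1 := congrArg Fin.val h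
      exact Fin.ext (by omega)
    · intro i
      have hil := i.isLt
      constructor
      · refine ⟨fun h => ?_, ?_, ?_⟩
        · have : (v : ℕ) = (v : ℕ) + (i : ℕ) + 1 := congrArg Fin.val h
          omega
        · simp only; omega
        · simp only; omega
      · intro hmem
        have hg := hgap _ hmem
        simp only at hg
        have : ((⟨(v : ℕ) + (i : ℕ) + 1, hwn i⟩ : Fin n) : ℕ) < b := by
          simp only; omega
        have hle := J.le_max' _ (Finset.mem_filter.mpr ⟨hmem, this⟩)
        rw [← hv] at hle
        have : (v : ℕ) + (i : ℕ) + 1 ≤ (v : ℕ) := hle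
        omega
  · -- all elements are ≥ b + t + 1; take the min element of I
    push_neg at hlow
    set v := I.min' hne with hv
    have hvI : v ∈ I := I.min'_mem hne
    have hvb : b + t + 1 ≤ (v : ℕ) := by
      rcases hgap v hvI with h | h
      · have := hlow v hvI; omega
      · exact h
    refine ⟨v, hvI, ?_⟩
    have hwn : ∀ i : Fin t, (v : ℕ) - ((i : ℕ) + 1) < n := fun i => by
      have := v.isLt; omega
    refine key_lemma t n I v (fun i => ⟨(v : ℕ) - ((i : ℕ) + 1), hwn i⟩) ?_ ?_
    · intro i i' h
      have : (v : ℕ) - ((i : ℕ) + 1) = (v : ℕ) - ((i' : ℕ) + 1) := congrArg Fin.val h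
      have hil := i.isLt; have hil' := i'.isLt
      exact Fin.ext (by omega)
    · intro i
      have hil := i.isLt
      constructor
      · refine ⟨fun h => ?_, ?_, ?_⟩
        · have : (v : ℕ) = (v : ℕ) - ((i : ℕ) + 1) := congrArg Fin.val h
          omega
        · simp only; omega
        · simp only; omega
      · intro hmem
        have hle := I.min'_le _ hmem
        rw [← hv] at hle
        have : (v : ℕ) ≤ (v : ℕ) - ((i : ℕ) + 1) := hle
        omega
end
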